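/- Let A be a nonempty linear order and let (I u) for u : ℕ → A be a family of linear orders such that for every a ∈ A and every u, the order I (a::u) is order-isomorphic to I u (equivalently, I is constant up to order isomorphism on tail-equivalence classes). Then the replacement X = Σₗ (u : A^ω), I u satisfies A ×ₗ X ≅ X; that is, X is invariant under left multiplication by A. -/

import Mathlib

/-- The sequence with first entry `a` followed by the entries of `u`. -/
def consSeq {α : Type*} (a : α) (u : ℕ → α) : ℕ → α
  | 0 => a
  | n + 1 => u n

/-- If the fibers `I u` are constant up to order isomorphism on
tail-equivalence classes (i.e. `I (a::u) ≅ I u` for all `a`, `u`), then the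
replacement `X = Σₗ (u : A^ω), I u` satisfies `A ×ₗ X ≅ X`. -/
theorem replacement_invariant_left_mul (A : Type*) [LinearOrder A] [Nonempty A]
    (I : (ℕ → A) → Type*) [∀ u, LinearOrder (I u)]
    (h : ∀ (a : A) (u : ℕ → A), Nonempty (I (consSeq a u) ≃o I u)) :
    Nonempty
      (Lex (A × Lex (Σ u : Lex (ℕ → A), I (ofLex u))) ≃o
        Lex (Σ u : Lex (ℕ → A), I (ofLex u))) := by
  classical
  let e : ∀ (a : A) (u : ℕ → A), I (consSeq a u) ≃o I u := fun a u => (h a u).some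
  let f : Lex (A × Lex (Σ u : Lex (ℕ → A), I (ofLex u))) →
      Lex (Σ u : Lex (ℕ → A), I (ofLex u)) :=
    fun p =>
      toLex ⟨toLex (consSeq (ofLex p).1 (ofLex (ofLex (ofLex p).2).1)),
        (e (ofLex p).1 (ofLex (ofLex (ofLex p).2).1)).symm (ofLex (ofLex p).2).2⟩
  have cons_lt : ∀ (a b : A) (u v : ℕ → A),
      toLex (a, toLex u) < toLex (b, toLex v) →
      (toLex (consSeq a u) : Lex (ℕ → A)) < toLex (consSeq b v) := by
    intro a b u v hlt
    rw [Prod.Lex.lt_iff] at hlt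
    rcases hlt with hab | ⟨rfl, huv⟩
    · exact ⟨0, fun j hj => absurd hj (Nat.not_lt_zero j), hab⟩
    · obtain ⟨i, h1, h2⟩ := huv
      exact ⟨i + 1, fun j hj => by
        cases j with
        | zero => rfl
        | succ k => exact h1 k (Nat.succ_lt_succ_iff.mp hj), h2⟩
  have hf : StrictMono f := by
    rintro ⟨a, u, x⟩ ⟨b, v, y⟩ hlt
    have hlt' : toLex ((a, toLex ⟨u, x⟩) : A × Lex (Σ u : Lex (ℕ → A), I (ofLex u))) <
        toLex (b, toLex ⟨v, y⟩) := hlt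
    rcases Prod.Lex.lt_iff.mp hlt' with hab | ⟨heq, huv⟩
    · exact Sigma.Lex.left _ _ (cons_lt a b _ _ (Prod.Lex.lt_iff.mpr (Or.inl hab)))
    · obtain rfl : a = b := heq
      cases huv with
      | left x' y' h2 =>
        exact Sigma.Lex.left _ _ (cons_lt a a _ _
          (Prod.Lex.lt_iff.mpr (Or.inr ⟨rfl, h2⟩)))
      | right x' y' h2 =>
        exact Sigma.Lex.right _ _ ((e a _).symm.strictMono h2)
  have hsurj : Function.Surjective f := by
    rintro ⟨v, y⟩
    revert y
    rw [show v = toLex (consSeq (v 0) (fun n => v (n + 1))) from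
      funext fun n => by cases n <;> rfl]
    intro y
    exact ⟨toLex (v 0, toLex ⟨toLex (fun n => v (n + 1)), e _ _ y⟩), by
      show toLex (⟨toLex (consSeq (v 0) fun n => v (n + 1)),
        (e (v 0) (fun n => v (n + 1))).symm ((e (v 0) (fun n => v (n + 1))) y)⟩ :
          Σ u : Lex (ℕ → A), I (ofLex u)) = _
      erw [OrderIso.symm_apply_apply]
      rfl⟩

  exact ⟨hf.orderIsoOfSurjective f hsurj⟩
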